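/- For every natural number n, G n = F n, i.e. G n equals the number of ordered set partitions of an n-element set into blocks of size at most 2 (the restricted Fubini number F_{n,≤2}). -/

import Mathlib

/-- `F n` is the number of ordered set partitions of `Fin n` with blocks of
size at most `2` (the restricted Fubini number `F_{n, ≤ 2}`). -/
noncomputable def restrictedFubini (n : ℕ) : ℕ :=
  Nat.card {B : List (Finset (Fin n)) //
    (∀ b ∈ B, b.Nonempty ∧ b.card ≤ 2) ∧
    B.Pairwise Disjoint ∧
    B.foldr (· ∪ ·) ∅ = Finset.univ}

open Finset

namespace OSPAux

variable {α : Type*} {β : Type*} [DecidableEq α] [DecidableEq β]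

def IsOSP (s : Finset α) (B : List (Finset α)) : Prop :=
  (∀ b ∈ B, b.Nonempty ∧ b.card ≤ 2) ∧ B.Pairwise Disjoint ∧ B.foldr (· ∪ ·) ∅ = s

lemma mem_foldr_union {B : List (Finset α)} {a : α} :
    a ∈ B.foldr (· ∪ ·) ∅ ↔ ∃ b ∈ B, a ∈ b := by
  induction B with
  | nil => simp
  | cons c B ih => simp [ih]

lemma foldr_union_append (B₁ B₂ : List (Finset α)) :
    (B₁ ++ B₂).foldr (· ∪ ·) ∅ = B₁.foldr (· ∪ ·) ∅ ∪ B₂.foldr (· ∪ ·) ∅ := by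
  ext a
  simp only [mem_foldr_union, List.mem_append, Finset.mem_union]
  constructor
  · rintro ⟨b, hb | hb, ha⟩
    exacts [Or.inl ⟨b, hb, ha⟩, Or.inr ⟨b, hb, ha⟩]
  · rintro (⟨b, hb, ha⟩ | ⟨b, hb, ha⟩)
    exacts [⟨b, Or.inl hb, ha⟩, ⟨b, Or.inr hb, ha⟩]

lemma disjoint_foldr_union {c : Finset α} {B : List (Finset α)} :
    Disjoint c (B.foldr (· ∪ ·) ∅) ↔ ∀ b ∈ B, Disjoint c b := by
  simp only [Finset.disjoint_left, mem_foldr_union]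
  constructor
  · intro h b hb a ha hab
    exact h ha ⟨b, hb, hab⟩
  · rintro h a ha ⟨b, hb, hab⟩
    exact h b hb ha hab

lemma block_subset {s : Finset α} {B : List (Finset α)} (h : IsOSP s B)
    {b : Finset α} (hb : b ∈ B) : b ⊆ s := by
  intro a ha
  rw [← h.2.2]
  exact mem_foldr_union.2 ⟨b, hb, ha⟩

lemma length_le_card {s : Finset α} {B : List (Finset α)} (h : IsOSP s B) :
    B.length ≤ s.card := by
  induction B generalizing s with
  | nil => simp
  | cons c B ih =>
    obtain ⟨h1, h2, h3⟩ := h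
    rw [List.pairwise_cons] at h2
    have hd : Disjoint c (B.foldr (· ∪ ·) ∅) :=
      disjoint_foldr_union.2 fun b hb => h2.1 b hb
    have hU : IsOSP (B.foldr (· ∪ ·) ∅) B :=
      ⟨fun b hb => h1 b (List.mem_cons_of_mem _ hb), h2.2, rfl⟩
    have hcard : s.card = c.card + (B.foldr (· ∪ ·) ∅).card := by
      rw [← h3]
      exact Finset.card_union_of_disjoint hd
    have hc1 : 1 ≤ c.card := Finset.card_pos.2 (h1 c (List.mem_cons_self)).1
    have := ih hU
    simp only [List.length_cons]
    omega

lemma finite_osp (s : Finset α) : Finite {B : List (Finset α) // IsOSP s B} := by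
  have h : Set.Finite {l : List ↥(s.powerset) | l.length ≤ s.card} :=
    List.finite_length_le _ _
  have h2 : Set.Finite ((List.map (Subtype.val)) '' {l : List ↥(s.powerset) | l.length ≤ s.card}) :=
    h.image _
  apply Set.Finite.subset h2
  rintro B hB
  have hsub : ∀ b ∈ B, b ∈ s.powerset := fun b hb =>
    Finset.mem_powerset.2 (block_subset hB hb)
  refine ⟨B.attach.map (fun b => ⟨b.1, hsub b.1 b.2⟩), ?_, ?_⟩
  · simp only [Set.mem_setOf_eq, List.length_map, List.length_attach]
    exact length_le_card hB
  · simp [List.map_map, Function.comp_def]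

noncomputable def ospCount (s : Finset α) : ℕ := Nat.card {B : List (Finset α) // IsOSP s B}

lemma ospCount_image {g : α → β} {s : Finset α} (hg : Set.InjOn g s) :
    ospCount (s.image g) = ospCount s := by
  haveI := finite_osp s
  haveI := finite_osp (s.image g)
  -- the forward map
  have key : ∀ B : List (Finset α), IsOSP s B → IsOSP (s.image g) (B.map (Finset.image g)) := by
    intro B ⟨h1, h2, h3⟩
    refine ⟨?_, ?_, ?_⟩
    · intro b hb
      obtain ⟨c, hc, rfl⟩ := List.mem_map.1 hb
      exact ⟨(h1 c hc).1.image g, (Finset.card_image_le).trans (h1 c hc).2⟩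
    · refine (List.pairwise_map).2 ?_
      refine h2.imp_of_mem ?_
      intro c d hc hd hcd
      rw [Finset.disjoint_left]
      rintro a ha hb
      obtain ⟨a1, ha1, rfl⟩ := Finset.mem_image.1 ha
      obtain ⟨a2, ha2, hEq⟩ := Finset.mem_image.1 hb
      have := hg (block_subset ⟨h1, h2, h3⟩ hd ha2) (block_subset ⟨h1, h2, h3⟩ hc ha1) hEq
      subst this
      exact (Finset.disjoint_left.1 hcd ha1) ha2
    · ext a
      simp only [mem_foldr_union, List.mem_map, Finset.mem_image]
      constructor
      · rintro ⟨b, ⟨c, hc, rfl⟩, hab⟩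
        obtain ⟨a1, ha1, rfl⟩ := Finset.mem_image.1 hab
        exact ⟨a1, by rw [← h3]; exact mem_foldr_union.2 ⟨c, hc, ha1⟩, rfl⟩
      · rintro ⟨a1, ha1, rfl⟩
        rw [← h3] at ha1
        obtain ⟨c, hc, hac⟩ := mem_foldr_union.1 ha1
        exact ⟨c.image g, ⟨c, hc, rfl⟩, Finset.mem_image_of_mem g hac⟩
  symm
  apply Nat.card_eq_of_bijective
    (fun B => (⟨(B.1.map (Finset.image g)), key B.1 B.2⟩ : {B // IsOSP (s.image g) B}))
  constructor
  · rintro ⟨B, hB⟩ ⟨C, hC⟩ hEq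
    simp only [Subtype.mk.injEq] at hEq ⊢
    have himg : ∀ b c : Finset α, b ⊆ s → c ⊆ s → b.image g = c.image g → b = c := by
      intro b c hb hc h
      ext a
      constructor
      · intro ha
        have : g a ∈ c.image g := h ▸ Finset.mem_image_of_mem g ha
        obtain ⟨a2, ha2, hEq2⟩ := Finset.mem_image.1 this
        exact (hg (hc ha2) (hb ha)) hEq2 ▸ ha2
      · intro ha
        have : g a ∈ b.image g := h ▸ Finset.mem_image_of_mem g ha
        obtain ⟨a2, ha2, hEq2⟩ := Finset.mem_image.1 this
        exact (hg (hb ha2) (hc ha)) hEq2 ▸ ha2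
    have hinj : ∀ B C : List (Finset α), (∀ b ∈ B, b ⊆ s) → (∀ c ∈ C, c ⊆ s) →
        B.map (Finset.image g) = C.map (Finset.image g) → B = C := by
      intro B
      induction B with
      | nil => intro C _ _ h; cases C <;> simp_all
      | cons b B ih =>
        intro C hB hC h
        cases C with
        | nil => simp_all
        | cons c C =>
          simp only [List.map_cons, List.cons.injEq] at h
          have := himg b c (hB b (List.mem_cons_self)) (hC c (List.mem_cons_self)) h.1
          subst this
          rw [ih C (fun x hx => hB x (List.mem_cons_of_mem _ hx))
            (fun x hx => hC x (List.mem_cons_of_mem _ hx)) h.2]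
    exact hinj B C (fun b hb => block_subset hB hb) (fun c hc => block_subset hC hc) hEq
  · rintro ⟨B', hB'⟩
    have hfix : ∀ b : Finset β, b ⊆ s.image g → (s.filter (fun a => g a ∈ b)).image g = b := by
      intro b hb
      ext y
      simp only [Finset.mem_image, Finset.mem_filter]
      constructor
      · rintro ⟨a, ⟨_, hab⟩, rfl⟩; exact hab
      · intro hy
        obtain ⟨a, ha, rfl⟩ := Finset.mem_image.1 (hb hy)
        exact ⟨a, ⟨ha, hy⟩, rfl⟩
    have hcardfix : ∀ b : Finset β, b ⊆ s.image g →
        (s.filter (fun a => g a ∈ b)).card = b.card := by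
      intro b hb
      conv_rhs => rw [← hfix b hb]
      exact (Finset.card_image_of_injOn (hg.mono (fun a ha => (Finset.mem_filter.1 ha).1))).symm
    set B : List (Finset α) := B'.map (fun b => s.filter (fun a => g a ∈ b)) with hBdef
    have hsubs : ∀ b' ∈ B', b' ⊆ s.image g := fun b' hb' => block_subset hB' hb'
    have hB : IsOSP s B := by
      refine ⟨?_, ?_, ?_⟩
      · intro b hb
        obtain ⟨b', hb', rfl⟩ := List.mem_map.1 hb
        constructor
        · rw [← Finset.card_pos, hcardfix b' (hsubs b' hb')]
          exact Finset.card_pos.2 (hB'.1 b' hb').1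
        · rw [hcardfix b' (hsubs b' hb')]
          exact (hB'.1 b' hb').2
      · refine (List.pairwise_map).2 (hB'.2.1.imp ?_)
        intro b' c' h
        rw [Finset.disjoint_left]
        rintro a ha hac
        exact (Finset.disjoint_left.1 h (Finset.mem_filter.1 ha).2) (Finset.mem_filter.1 hac).2
      · ext a
        simp only [mem_foldr_union, hBdef, List.mem_map]
        constructor
        · rintro ⟨b, ⟨b', hb', rfl⟩, hab⟩
          exact (Finset.mem_filter.1 hab).1
        · intro ha
          have : g a ∈ B'.foldr (· ∪ ·) ∅ := by
            rw [hB'.2.2]; exact Finset.mem_image_of_mem g ha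
          obtain ⟨b', hb', hgb'⟩ := mem_foldr_union.1 this
          exact ⟨_, ⟨b', hb', rfl⟩, Finset.mem_filter.2 ⟨ha, hgb'⟩⟩
    refine ⟨⟨B, hB⟩, ?_⟩
    apply Subtype.ext
    simp only [hBdef, List.map_map]
    conv_rhs => rw [← List.map_id B']
    apply List.map_congr_left
    intro b' hb'
    exact hfix b' (hsubs b' hb')

lemma restrictedFubini_eq_ospCount (n : ℕ) :
    Nat.card {B : List (Finset (Fin n)) //
      (∀ b ∈ B, b.Nonempty ∧ b.card ≤ 2) ∧
      B.Pairwise Disjoint ∧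
      B.foldr (· ∪ ·) ∅ = Finset.univ} = ospCount (Finset.range n) := by
  have h1 : ospCount (Finset.univ : Finset (Fin n)) = Nat.card {B : List (Finset (Fin n)) //
      (∀ b ∈ B, b.Nonempty ∧ b.card ≤ 2) ∧
      B.Pairwise Disjoint ∧
      B.foldr (· ∪ ·) ∅ = Finset.univ} := rfl
  rw [← h1]
  have h2 : (Finset.univ : Finset (Fin n)).image (Fin.val) = Finset.range n := by
    ext a
    simp only [Finset.mem_image, Finset.mem_range, Finset.mem_univ, true_and]
    exact ⟨fun ⟨i, h⟩ => h ▸ i.2, fun h => ⟨⟨a, h⟩, rfl⟩⟩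
  rw [← h2]
  exact (ospCount_image (Fin.val_injective.injOn)).symm

lemma ospCount_eq_of_card {s t : Finset ℕ} (h : s.card = t.card) :
    ospCount s = ospCount t := by
  have e : (s : Finset ℕ) ≃ (t : Finset ℕ) := Finset.equivOfCardEq h
  classical
  set g : ℕ → ℕ := fun a => if h : a ∈ s then ((e ⟨a, h⟩ : ↥t) : ℕ) else 0 with hg
  have hginj : Set.InjOn g s := by
    intro a ha b hb hab
    simp only [Finset.mem_coe] at ha hb
    simp only [hg] at hab
    rw [dif_pos ha, dif_pos hb] at hab
    exact congrArg Subtype.val (e.injective (Subtype.ext hab))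
  have himg : s.image g = t := by
    ext y
    simp only [Finset.mem_image]
    constructor
    · rintro ⟨a, ha, rfl⟩
      simp only [hg, dif_pos ha]
      exact (e ⟨a, ha⟩).2
    · intro hy
      refine ⟨(e.symm ⟨y, hy⟩ : ↥s), (e.symm ⟨y, hy⟩).2, ?_⟩
      simp only [hg, dif_pos (e.symm ⟨y, hy⟩).2]
      rw [Subtype.coe_eta, Equiv.apply_symm_apply]
  rw [← himg]
  exact (ospCount_image hginj).symm

lemma split_unique {γ : Type*} {p : γ → Prop} :
    ∀ {l₁ l₁' : List γ} {a a' : γ} {l₂ l₂' : List γ},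
      l₁ ++ a :: l₂ = l₁' ++ a' :: l₂' → p a → p a' →
      (∀ c ∈ l₁, ¬ p c) → (∀ c ∈ l₁', ¬ p c) → l₁ = l₁' ∧ a = a' ∧ l₂ = l₂' := by
  intro l₁
  induction l₁ with
  | nil =>
    intro l₁' a a' l₂ l₂' h ha ha' h₁ h₁'
    cases l₁' with
    | nil => simpa using h
    | cons c l₁' =>
      simp only [List.nil_append, List.cons_append, List.cons.injEq] at h
      exact absurd (h.1 ▸ ha) (h₁' c (List.mem_cons_self))
  | cons c l₁ ih =>
    intro l₁' a a' l₂ l₂' h ha ha' h₁ h₁'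
    cases l₁' with
    | nil =>
      simp only [List.cons_append, List.nil_append, List.cons.injEq] at h
      exact absurd (h.1 ▸ ha') (h₁ c (List.mem_cons_self))
    | cons c' l₁' =>
      simp only [List.cons_append, List.cons.injEq] at h
      obtain ⟨e1, e2, e3⟩ := ih h.2 ha ha'
        (fun d hd => h₁ d (List.mem_cons_of_mem _ hd))
        (fun d hd => h₁' d (List.mem_cons_of_mem _ hd))
      exact ⟨by rw [h.1, e1], e2, e3⟩

lemma exists_split {γ : Type*} {p : γ → Prop} :
    ∀ {l : List γ}, (∃ a ∈ l, p a) →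
      ∃ l₁ a l₂, l = l₁ ++ a :: l₂ ∧ p a ∧ ∀ c ∈ l₁, ¬ p c := by
  intro l
  induction l with
  | nil => rintro ⟨a, ha, -⟩; simp at ha
  | cons c l ih =>
    intro h
    by_cases hc : p c
    · exact ⟨[], c, l, rfl, hc, by simp⟩
    · obtain ⟨a, ha, hpa⟩ := h
      rcases List.mem_cons.1 ha with rfl | ha
      · exact absurd hpa hc
      · obtain ⟨l₁, a', l₂, rfl, hpa', hl₁⟩ := ih ⟨a, ha, hpa⟩
        exact ⟨c :: l₁, a', l₂, rfl, hpa', by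
          intro d hd
          rcases List.mem_cons.1 hd with rfl | hd
          exacts [hc, hl₁ d hd]⟩

lemma nat_card_sigma {ι : Type*} [Fintype ι] (f : ι → Type*) [hf : ∀ i, Finite (f i)] :
    Nat.card (Σ i, f i) = ∑ i, Nat.card (f i) := by
  letI : ∀ i, Fintype (f i) := fun i => Fintype.ofFinite _
  rw [Nat.card_eq_fintype_card, Fintype.card_sigma]
  exact Finset.sum_congr rfl fun i _ => (Nat.card_eq_fintype_card).symm

lemma isOSP_glue {s b T : Finset ℕ} {x : ℕ} (hbs : b ⊆ s) (hxb : x ∈ b) (hb2 : b.card ≤ 2)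
    (hT : T ⊆ s \ b) {B₁ B₂ : List (Finset ℕ)}
    (h₁ : IsOSP T B₁) (h₂ : IsOSP ((s \ b) \ T) B₂) :
    IsOSP s (B₁ ++ b :: B₂) := by
  have hc1 : ∀ c ∈ B₁, c ⊆ T := fun c hc => block_subset h₁ hc
  have hc2 : ∀ c ∈ B₂, c ⊆ (s \ b) \ T := fun c hc => block_subset h₂ hc
  have hdTb : Disjoint T b := Finset.sdiff_disjoint.mono_left hT
  have hdUb : Disjoint ((s \ b) \ T) b := Finset.sdiff_disjoint.mono_left Finset.sdiff_subset
  have hdUT : Disjoint ((s \ b) \ T) T := Finset.sdiff_disjoint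
  refine ⟨?_, ?_, ?_⟩
  · intro c hc
    rcases List.mem_append.1 hc with hc | hc
    · exact h₁.1 c hc
    · rcases List.mem_cons.1 hc with rfl | hc
      · exact ⟨⟨x, hxb⟩, hb2⟩
      · exact h₂.1 c hc
  · rw [List.pairwise_append]
    refine ⟨h₁.2.1, ?_, ?_⟩
    · rw [List.pairwise_cons]
      exact ⟨fun c hc => (hdUb.mono_left (hc2 c hc)).symm, h₂.2.1⟩
    · intro c hc d hd
      rcases List.mem_cons.1 hd with rfl | hd
      · exact hdTb.mono_left (hc1 c hc)
      · exact Disjoint.mono (hc1 c hc) (hc2 d hd) hdUT.symm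
  · rw [foldr_union_append, List.foldr_cons, h₁.2.2, h₂.2.2]
    ext a
    simp only [Finset.mem_union, Finset.mem_sdiff]
    constructor
    · rintro (h | h | h)
      exacts [(Finset.mem_sdiff.1 (hT h)).1, hbs h, h.1.1]
    · intro hs
      by_cases hab : a ∈ b
      · exact Or.inr (Or.inl hab)
      · by_cases haT : a ∈ T
        · exact Or.inl haT
        · exact Or.inr (Or.inr ⟨⟨hs, hab⟩, haT⟩)

lemma ospCount_rec {s : Finset ℕ} {x : ℕ} (hx : x ∈ s) :
    ospCount s = ∑ b ∈ s.powerset.filter (fun b => x ∈ b ∧ b.card ≤ 2),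
      ∑ T ∈ (s \ b).powerset, ospCount T * ospCount ((s \ b) \ T) := by
  classical
  set Blk := s.powerset.filter (fun b => x ∈ b ∧ b.card ≤ 2) with hBlk
  haveI : ∀ t : Finset ℕ, Finite {B // IsOSP t B} := finite_osp
  have hmem : ∀ b ∈ Blk, b ⊆ s ∧ x ∈ b ∧ b.card ≤ 2 := by
    intro b hb
    rw [hBlk, Finset.mem_filter, Finset.mem_powerset] at hb
    exact ⟨hb.1, hb.2.1, hb.2.2⟩
  have key : Nat.card (Σ b : ↥Blk, Σ T : ↥((s \ b.1).powerset),
      {B // IsOSP T.1 B} × {B // IsOSP ((s \ b.1) \ T.1) B}) = Nat.card {B // IsOSP s B} := by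
    apply Nat.card_eq_of_bijective (fun q =>
      ⟨q.2.2.1.1 ++ q.1.1 :: q.2.2.2.1, by
        obtain ⟨⟨b, hb⟩, ⟨T, hT⟩, ⟨B₁, h₁⟩, ⟨B₂, h₂⟩⟩ := q
        obtain ⟨hbs, hxb, hb2⟩ := hmem b hb
        exact isOSP_glue hbs hxb hb2 (Finset.mem_powerset.1 hT) h₁ h₂⟩)
    constructor
    · rintro ⟨⟨b, hb⟩, ⟨T, hT⟩, ⟨B₁, h₁⟩, ⟨B₂, h₂⟩⟩ ⟨⟨b', hb'⟩, ⟨T', hT'⟩, ⟨B₁', h₁'⟩, ⟨B₂', h₂'⟩⟩ hEq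
      simp only [Subtype.mk.injEq] at hEq
      have hn : ∀ c ∈ B₁, ¬ x ∈ c := by
        intro c hc hxc
        have : x ∈ s \ b := Finset.mem_powerset.1 hT (block_subset h₁ hc hxc)
        exact (Finset.mem_sdiff.1 this).2 (hmem b hb).2.1
      have hn' : ∀ c ∈ B₁', ¬ x ∈ c := by
        intro c hc hxc
        have : x ∈ s \ b' := Finset.mem_powerset.1 hT' (block_subset h₁' hc hxc)
        exact (Finset.mem_sdiff.1 this).2 (hmem b' hb').2.1
      obtain ⟨e1, e2, e3⟩ := split_unique (p := fun c => x ∈ c) hEq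
        (hmem b hb).2.1 (hmem b' hb').2.1 hn hn'
      have eT : T = T' := by
        rw [e1] at h₁
        exact h₁.2.2.symm.trans h₁'.2.2
      subst e1 e2 e3 eT
      rfl
    · rintro ⟨B, hB⟩
      have hxB : ∃ b ∈ B, x ∈ b := mem_foldr_union.1 (hB.2.2.symm ▸ hx)
      obtain ⟨B₁, b, B₂, rfl, hxb, hB₁x⟩ := exists_split hxB
      obtain ⟨hblocks, hpw, hun⟩ := hB
      rw [List.pairwise_append] at hpw
      obtain ⟨hpw₁, hpw₂, hcross⟩ := hpw
      rw [List.pairwise_cons] at hpw₂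
      obtain ⟨hbB₂, hpwB₂⟩ := hpw₂
      set T := B₁.foldr (· ∪ ·) ∅ with hTdef
      set U := B₂.foldr (· ∪ ·) ∅ with hUdef
      have hsplit : T ∪ (b ∪ U) = s := by
        rw [← hun, foldr_union_append, List.foldr_cons]
      have hbs : b ⊆ s := fun a ha => by
        rw [← hsplit]; exact Finset.mem_union.2 (Or.inr (Finset.mem_union.2 (Or.inl ha)))
      have hTs : T ⊆ s := fun a ha => by
        rw [← hsplit]; exact Finset.mem_union.2 (Or.inl ha)
      have hTb : ∀ a ∈ T, a ∉ b := by
        intro a ha hab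
        obtain ⟨c, hc, hac⟩ := mem_foldr_union.1 ha
        exact Finset.disjoint_left.1 (hcross c hc b (List.mem_cons_self)) hac hab
      have hTsub : T ⊆ s \ b := fun a ha => Finset.mem_sdiff.2 ⟨hTs ha, hTb a ha⟩
      have hUeq : U = (s \ b) \ T := by
        ext a
        simp only [Finset.mem_sdiff]
        constructor
        · intro ha
          obtain ⟨d, hd, had⟩ := mem_foldr_union.1 ha
          refine ⟨⟨?_, fun hab => Finset.disjoint_left.1 (hbB₂ d hd) hab had⟩, ?_⟩
          · rw [← hsplit]
            exact Finset.mem_union.2 (Or.inr (Finset.mem_union.2 (Or.inr ha)))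
          · intro haT
            obtain ⟨c, hc, hac⟩ := mem_foldr_union.1 haT
            exact Finset.disjoint_left.1
              (hcross c hc d (List.mem_cons_of_mem _ hd)) hac had
        · rintro ⟨⟨has, hab⟩, haT⟩
          rw [← hsplit] at has
          rcases Finset.mem_union.1 has with h | h
          · exact absurd h haT
          · rcases Finset.mem_union.1 h with h | h
            · exact absurd h hab
            · exact h
      refine ⟨⟨⟨b, ?_⟩, ⟨T, Finset.mem_powerset.2 hTsub⟩,
          ⟨B₁, fun c hc => hblocks c (List.mem_append_left _ hc), hpw₁, rfl⟩,
          ⟨B₂, fun c hc => hblocks c (by simp [hc]), hpwB₂, hUeq⟩⟩, rfl⟩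
      rw [hBlk, Finset.mem_filter, Finset.mem_powerset]
      exact ⟨hbs, hxb, (hblocks b (by simp)).2⟩
  rw [ospCount, ← key, nat_card_sigma]
  rw [← Finset.sum_coe_sort Blk
    (fun b => ∑ T ∈ (s \ b).powerset, ospCount T * ospCount ((s \ b) \ T))]
  apply Finset.sum_congr rfl
  intro b _
  rw [nat_card_sigma, ← Finset.sum_coe_sort ((s \ b.1).powerset)
    (fun T => ospCount T * ospCount ((s \ b.1) \ T))]
  apply Finset.sum_congr rfl
  intro T _
  rw [Nat.card_prod]
  rfl

noncomputable def fub (n : ℕ) : ℕ := ospCount (Finset.range n)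

lemma ospCount_eq_fub (t : Finset ℕ) : ospCount t = fub t.card :=
  ospCount_eq_of_card (by rw [Finset.card_range])

lemma fub_zero : fub 0 = 1 := by
  have huniq : ∀ B : List (Finset ℕ), IsOSP (∅ : Finset ℕ) B → B = [] := by
    intro B h
    cases B with
    | nil => rfl
    | cons c B =>
      have hc : c ⊆ ∅ := block_subset h (List.mem_cons_self)
      obtain ⟨a, ha⟩ := (h.1 c (List.mem_cons_self)).1
      simpa using hc ha
  have : fub 0 = Nat.card {B : List (Finset ℕ) // IsOSP ∅ B} := by
    rw [fub, Finset.range_zero]; rfl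
  rw [this]
  rw [Nat.card_eq_one_iff_unique]
  constructor
  · exact ⟨fun a b => Subtype.ext ((huniq a.1 a.2).trans (huniq b.1 b.2).symm)⟩
  · exact ⟨⟨[], by simp, by simp, rfl⟩⟩

lemma inner_sum (u : Finset ℕ) :
    ∑ T ∈ u.powerset, ospCount T * ospCount (u \ T)
      = ∑ j ∈ Finset.range (u.card + 1), u.card.choose j * (fub j * fub (u.card - j)) := by
  set g : ℕ → ℕ := fun j => fub j * fub (u.card - j) with hg
  have h1 : ∀ T ∈ u.powerset, ospCount T * ospCount (u \ T) = g T.card := by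
    intro T hT
    rw [Finset.mem_powerset] at hT
    rw [hg]
    simp only
    rw [ospCount_eq_fub, ospCount_eq_fub, Finset.card_sdiff_of_subset hT]
  calc ∑ T ∈ u.powerset, ospCount T * ospCount (u \ T)
      = ∑ T ∈ u.powerset, g T.card := Finset.sum_congr rfl h1
    _ = ∑ j ∈ Finset.range (u.card + 1), u.card.choose j • g j :=
        Finset.sum_powerset_apply_card g
    _ = ∑ j ∈ Finset.range (u.card + 1), u.card.choose j * (fub j * fub (u.card - j)) := by
        simp [hg, smul_eq_mul]

lemma fub_rec {n : ℕ} (hn : 1 ≤ n) :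
    fub n = (∑ i ∈ Finset.Icc 1 n, Nat.choose (n-1) (i-1) * fub (n-i) * fub (i-1))
      + ∑ i ∈ Finset.Icc 1 (n-1), (n-i) * Nat.choose (n-1) (i-1) * fub (n-i-1) * fub (i-1) := by
  classical
  have h0 : (0 : ℕ) ∈ Finset.range n := Finset.mem_range.2 hn
  have hBlkEq : (Finset.range n).powerset.filter (fun b => 0 ∈ b ∧ b.card ≤ 2)
      = insert {0} (((Finset.range n).erase 0).image fun y => ({0, y} : Finset ℕ)) := by
    ext b
    simp only [Finset.mem_filter, Finset.mem_powerset, Finset.mem_insert, Finset.mem_image,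
      Finset.mem_erase]
    constructor
    · rintro ⟨hbs, h0b, hb2⟩
      interval_cases hcard : b.card
      · exact absurd (Finset.card_eq_zero.1 hcard ▸ h0b) (by simp)
      · obtain ⟨a, rfl⟩ := Finset.card_eq_one.1 hcard
        left
        rw [Finset.mem_singleton.1 h0b]
      · obtain ⟨a, c, hac, rfl⟩ := Finset.card_eq_two.1 hcard
        right
        rcases Finset.mem_insert.1 h0b with rfl | h0c
        · exact ⟨c, ⟨Ne.symm hac, hbs (by simp)⟩, rfl⟩
        · obtain rfl := (Finset.mem_singleton.1 h0c).symm
          exact ⟨a, ⟨hac, hbs (by simp)⟩, Finset.pair_comm 0 a⟩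
    · rintro (rfl | ⟨y, ⟨hy0, hyn⟩, rfl⟩)
      · exact ⟨Finset.singleton_subset_iff.2 h0, Finset.mem_singleton_self 0, by simp⟩
      · refine ⟨?_, Finset.mem_insert_self _ _, Finset.card_insert_le _ _ |>.trans (by simp)⟩
        intro a ha
        rcases Finset.mem_insert.1 ha with rfl | ha
        · exact h0
        · exact Finset.mem_singleton.1 ha ▸ hyn
  have hnotmem : ({0} : Finset ℕ) ∉ ((Finset.range n).erase 0).image fun y => ({0, y} : Finset ℕ) := by
    intro h
    obtain ⟨y, hy, hEq⟩ := Finset.mem_image.1 h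
    have : y ∈ ({0} : Finset ℕ) := hEq ▸ Finset.mem_insert.2 (Or.inr (Finset.mem_singleton_self y))
    exact (Finset.mem_erase.1 hy).1 (Finset.mem_singleton.1 this)
  have hinj : Set.InjOn (fun y => ({0, y} : Finset ℕ)) ((Finset.range n).erase 0) := by
    intro y hy z hz hEq
    simp only [Finset.coe_erase, Set.mem_diff, Finset.mem_coe] at hy hz
    have hy0 : y ≠ 0 := by simpa using hy.2
    have hEq' : ({0, y} : Finset ℕ) = {0, z} := hEq
    have : y ∈ ({0, z} : Finset ℕ) :=
      hEq' ▸ Finset.mem_insert.2 (Or.inr (Finset.mem_singleton_self y))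
    rcases Finset.mem_insert.1 this with h | h
    · exact absurd h hy0
    · exact Finset.mem_singleton.1 h
  have hcard1 : (Finset.range n \ {0}).card = n - 1 := by
    rw [Finset.card_sdiff_of_subset (Finset.singleton_subset_iff.2 h0), Finset.card_range,
      Finset.card_singleton]
  rw [show fub n = ospCount (Finset.range n) from rfl, ospCount_rec h0, hBlkEq,
    Finset.sum_insert hnotmem, Finset.sum_image hinj]
  have hval2 : ∀ y ∈ (Finset.range n).erase 0,
      ∑ T ∈ (Finset.range n \ {0, y}).powerset,
        ospCount T * ospCount ((Finset.range n \ {0, y}) \ T)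
      = ∑ j ∈ Finset.range (n - 2 + 1), (n-2).choose j * (fub j * fub (n - 2 - j)) := by
    intro y hy
    have hy' := Finset.mem_erase.1 hy
    have hsub : ({0, y} : Finset ℕ) ⊆ Finset.range n := by
      intro a ha
      rcases Finset.mem_insert.1 ha with rfl | ha
      · exact h0
      · exact Finset.mem_singleton.1 ha ▸ hy'.2
    have hcard2 : (Finset.range n \ {0, y}).card = n - 2 := by
      rw [Finset.card_sdiff_of_subset hsub, Finset.card_range, Finset.card_insert_of_notMem (by
        simp [Ne.symm hy'.1]), Finset.card_singleton]
    rw [inner_sum, hcard2]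
  rw [Finset.sum_congr rfl hval2, Finset.sum_const, inner_sum, hcard1,
    Finset.card_erase_of_mem h0, Finset.card_range, smul_eq_mul]
  congr 1
  · -- first sums
    rw [← Finset.Ico_add_one_right_eq_Icc, Finset.sum_Ico_eq_sum_range]
    have hne : n + 1 - 1 = n - 1 + 1 := by omega
    rw [hne]
    apply Finset.sum_congr rfl
    intro j _
    have e1 : 1 + j - 1 = j := by omega
    have e2 : n - (1 + j) = n - 1 - j := by omega
    rw [e1, e2]
    ring
  · -- second sums
    rw [← Finset.Ico_add_one_right_eq_Icc, Finset.sum_Ico_eq_sum_range]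
    have hne : n - 1 + 1 - 1 = n - 1 := by omega
    rw [hne, Finset.mul_sum]
    rcases eq_or_ne n 1 with rfl | hn1
    · simp
    rw [show n - 2 + 1 = n - 1 from by omega]
    apply Finset.sum_congr rfl
    intro j hj
    have hj' := Finset.mem_range.1 hj
    have e1 : 1 + j - 1 = j := by omega
    have e2 : n - (1 + j) = n - 1 - j := by omega
    have e3 : n - 1 - j - 1 = n - 2 - j := by omega
    rw [e1, e2, e3]
    have hch : (n - 1 - j) * (n-1).choose j = (n - 1) * (n-2).choose j := by
      have := Nat.choose_mul_succ_eq (n - 2) j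
      have hrw : n - 2 + 1 = n - 1 := by omega
      rw [hrw] at this
      rw [mul_comm (n - 1 - j) ((n-1).choose j), ← this, mul_comm]
    calc (n - 1) * ((n-2).choose j * (fub j * fub (n - 2 - j)))
        = ((n - 1) * (n-2).choose j) * (fub (n - 2 - j) * fub j) := by ring
      _ = ((n - 1 - j) * (n-1).choose j) * (fub (n - 2 - j) * fub j) := by rw [hch]
      _ = (n - 1 - j) * (n-1).choose j * fub (n - 2 - j) * fub j := by ring

end OSPAux

/-- The number `G n` of complete τ-exceptional sequences over `Γ_n^2` equals the
restricted Fubini number `F_{n, ≤ 2}`. -/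
theorem G_eq_restrictedFubini (G : ℕ → ℕ) (hG0 : G 0 = 1)
    (hG : ∀ n : ℕ, 1 ≤ n →
      G n = (∑ i ∈ Finset.Icc 1 n,
              Nat.choose (n - 1) (i - 1) * G (n - i) * G (i - 1)) +
            (∑ i ∈ Finset.Icc 1 (n - 1),
              (n - i) * Nat.choose (n - 1) (i - 1) * G (n - i - 1) * G (i - 1))) :
    ∀ n : ℕ, G n = restrictedFubini n := by
  have hFub : ∀ m : ℕ, restrictedFubini m = OSPAux.fub m := fun m =>
    OSPAux.restrictedFubini_eq_ospCount m
  intro n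
  induction n using Nat.strong_induction_on with
  | _ n ih =>
    rcases Nat.eq_zero_or_pos n with rfl | hn
    · rw [hG0, hFub 0, OSPAux.fub_zero]
    · rw [hFub n, OSPAux.fub_rec hn, hG n hn]
      congr 1
      · apply Finset.sum_congr rfl
        intro i hi
        have hi' := Finset.mem_Icc.1 hi
        rw [ih (n - i) (by omega), ih (i - 1) (by omega), hFub, hFub]
      · apply Finset.sum_congr rfl
        intro i hi
        have hi' := Finset.mem_Icc.1 hi
        rw [ih (n - i - 1) (by omega), ih (i - 1) (by omega), hFub, hFub]
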